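/- There exists a channel from Fin 4 to Fin 4, i.e. a matrix p : Fin 4 → Fin 4 → ℝ with p(i,j) ≥ 0 and Σ_i p(i,j) = 1 for every j, such that no injective encoder f : Bool → Fin 4 simultaneously minimizes the MAP bit error rate B(f) and the conditional entropy C(f) over all injective encoders: every injective f minimizing C(f) fails to minimize B(f). -/

import Mathlib

open Finset

attribute [local instance] Classical.propDecidable

/-- Binary entropy `H₂(p) = −p·log₂ p − (1−p)·log₂(1−p)`
(convention `0·log₂ 0 = 0` is automatic since `Real.logb 2 0 = 0`). -/
noncomputable def H2 (p : ℝ) : ℝ :=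
  -p * Real.logb 2 p - (1 - p) * Real.logb 2 (1 - p)

/-- Joint pmf on `Bool × Fin 4` for channel `p` (column-stochastic,
`p i j = P(Y = i | X = j)`), encoder `f`, and uniform input bit:
`μ(u,i) = (1/2)·p i (f u)`. -/
noncomputable def chμ (p : Fin 4 → Fin 4 → ℝ) (f : Bool → Fin 4) (u : Bool) (i : Fin 4) : ℝ :=
  (1 / 2) * p i (f u)

/-- `P(Y = i)` for the joint distribution `chμ`. -/
noncomputable def chPy (p : Fin 4 → Fin 4 → ℝ) (f : Bool → Fin 4) (i : Fin 4) : ℝ :=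
  chμ p f false i + chμ p f true i

/-- MAP bit error rate of encoder `f`:
`B(f) = (1/2)·Σᵢ min(p(i, f(1)), p(i, f(0)))`. -/
noncomputable def chB (p : Fin 4 → Fin 4 → ℝ) (f : Bool → Fin 4) : ℝ :=
  (1 / 2) * ∑ i : Fin 4, min (p i (f true)) (p i (f false))

/-- Conditional entropy of encoder `f`:
`C(f) = H(U|Y) = Σ_{i : P(Y=i)>0} P(Y=i)·H₂(μ(1,i)/(μ(0,i)+μ(1,i)))`. -/
noncomputable def chC (p : Fin 4 → Fin 4 → ℝ) (f : Bool → Fin 4) : ℝ :=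
  ∑ i ∈ Finset.univ.filter (fun i => 0 < chPy p f i),
    chPy p f i * H2 (chμ p f true i / chPy p f i)

/- auxiliary lemmas -/

lemma H2_zero' : H2 0 = 0 := by simp [H2]
lemma H2_one' : H2 1 = 0 := by simp [H2]
lemma H2_half' : H2 (1/2) = 1 := by
  have h : Real.logb 2 (1/2 : ℝ) = -1 := by
    rw [one_div, Real.logb_inv, Real.logb_self_eq_one] <;> norm_num
  unfold H2; rw [show (1:ℝ) - 1/2 = 1/2 by norm_num, h]; ring
lemma H2_third' : H2 (1/3) = Real.logb 2 3 - 2/3 := by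
  have h1 : Real.logb 2 (1/3 : ℝ) = -Real.logb 2 3 := by rw [one_div, Real.logb_inv]
  have h2 : Real.logb 2 (2/3 : ℝ) = 1 - Real.logb 2 3 := by
    rw [Real.logb_div (by norm_num) (by norm_num), Real.logb_self_eq_one] <;> norm_num
  unfold H2; rw [show (1:ℝ) - 1/3 = 2/3 by norm_num, h1, h2]; ring
lemma H2_quarter' : H2 (1/4) = 2 - (3/4) * Real.logb 2 3 := by
  have h1 : Real.logb 2 (1/4 : ℝ) = -2 := by
    rw [one_div, Real.logb_inv, show (4:ℝ) = 2^(2:ℕ) by norm_num, Real.logb_pow,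
      Real.logb_self_eq_one] <;> norm_num
  have h2 : Real.logb 2 (3/4 : ℝ) = Real.logb 2 3 - 2 := by
    rw [Real.logb_div (by norm_num) (by norm_num), show (4:ℝ) = 2^(2:ℕ) by norm_num,
      Real.logb_pow, Real.logb_self_eq_one] <;> norm_num
  unfold H2; rw [show (1:ℝ) - 1/4 = 3/4 by norm_num, h1, h2]; ring
lemma H2_sym' (x : ℝ) : H2 (1 - x) = H2 x := by unfold H2; ring_nf
lemma H2_two_thirds' : H2 (2/3) = Real.logb 2 3 - 2/3 := by
  rw [show (2:ℝ)/3 = 1 - 1/3 by norm_num, H2_sym', H2_third']; norm_num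
lemma H2_three_quarters' : H2 (3/4) = 2 - (3/4) * Real.logb 2 3 := by
  rw [show (3:ℝ)/4 = 1 - 1/4 by norm_num, H2_sym', H2_quarter']; norm_num

lemma logb23_gt : (14:ℝ)/9 < Real.logb 2 3 := by
  have hlog2 : 0 < Real.log 2 := Real.log_pos (by norm_num)
  have h : Real.log ((2:ℝ)^(14:ℕ)) < Real.log ((3:ℝ)^(9:ℕ)) :=
    Real.log_lt_log (by norm_num) (by norm_num)
  rw [Real.log_pow, Real.log_pow] at h
  rw [Real.logb, lt_div_iff₀ hlog2]
  push_cast at h; linarith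

lemma logb23_lt : Real.logb 2 3 < 2 := by
  have hlog2 : 0 < Real.log 2 := Real.log_pos (by norm_num)
  have h : Real.log (3:ℝ) < Real.log ((2:ℝ)^(2:ℕ)) :=
    Real.log_lt_log (by norm_num) (by norm_num)
  rw [Real.log_pow] at h
  rw [Real.logb, div_lt_iff₀ hlog2]
  push_cast at h; linarith

lemma chC_eq_sum (p : Fin 4 → Fin 4 → ℝ) (f : Bool → Fin 4) (h : ∀ i, 0 ≤ chPy p f i) :
    chC p f = ∑ i : Fin 4, chPy p f i * H2 (chμ p f true i / chPy p f i) := by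
  unfold chC
  exact Finset.sum_filter_of_ne fun i _ hne =>
    lt_of_le_of_ne (h i) (fun h0 => hne (by rw [← h0, zero_mul]))

/-- the channel matrix, rows = outputs, columns = inputs -/
noncomputable def Pch : Fin 4 → Fin 4 → ℝ :=
  ![![4/9, 4/9, 2/9, 4/9], ![0, 0, 2/9, 1/9], ![4/9, 2/9, 2/9, 4/9], ![1/9, 1/3, 1/3, 0]]

set_option maxHeartbeats 2000000 in
/-- There is a channel from `Fin 4` to `Fin 4` for which no injective encoder
minimizes both the conditional entropy and the MAP bit error rate:
every injective minimizer of `C` fails to minimize `B`. -/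
theorem exists_channel_entropy_ber_minimizers_differ :
    ∃ p : Fin 4 → Fin 4 → ℝ,
      (∀ i j, 0 ≤ p i j) ∧ (∀ j, ∑ i : Fin 4, p i j = 1) ∧
      ∀ f : Bool → Fin 4, Function.Injective f →
        (∀ f' : Bool → Fin 4, Function.Injective f' → chC p f ≤ chC p f') →
        ¬ (∀ f' : Bool → Fin 4, Function.Injective f' → chB p f ≤ chB p f') := by
  refine ⟨Pch, ?_, ?_, ?_⟩
  · intro i j; fin_cases i <;> fin_cases j <;> norm_num [Pch]
  · intro j; fin_cases j <;> norm_num [Pch, Fin.sum_univ_four, Matrix.cons_val_zero, Matrix.cons_val_one, Matrix.cons_val_two, Matrix.cons_val_three, Matrix.head_cons]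
  · intro f hinj hC hB
    have hPy : ∀ i, 0 ≤ chPy Pch f i := by
      intro i
      have h1 : ∀ i j, (0:ℝ) ≤ Pch i j := by
        intro i j; fin_cases i <;> fin_cases j <;> norm_num [Pch]
      have := h1 i (f false); have := h1 i (f true)
      unfold chPy chμ; linarith
    have hL1 := logb23_gt
    have hL2 := logb23_lt
    -- encoder (1,3) : C-optimal,  encoder (0,2) : B-optimal
    have hinj13 : Function.Injective (fun u : Bool => if u then (1:Fin 4) else 3) := by decide
    have hinj02 : Function.Injective (fun u : Bool => if u then (0:Fin 4) else 2) := by decide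
    have hPy13 : ∀ i, 0 ≤ chPy Pch (fun u : Bool => if u then (1:Fin 4) else 3) i := by
      intro i; fin_cases i <;> norm_num [chPy, chμ, Pch, Matrix.cons_val_zero, Matrix.cons_val_one, Matrix.cons_val_two, Matrix.cons_val_three, Matrix.head_cons]
    have hC13 : chC Pch (fun u : Bool => if u then (1:Fin 4) else 3)
        = 2/9 + Real.logb 2 3 / 3 := by
      rw [chC_eq_sum _ _ hPy13]
      norm_num [chPy, chμ, Pch, Fin.sum_univ_four, H2_zero', H2_one', H2_half', H2_third',
        H2_quarter', H2_two_thirds', H2_three_quarters', Matrix.cons_val_zero, Matrix.cons_val_one, Matrix.cons_val_two, Matrix.cons_val_three, Matrix.head_cons]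
      ring
    have hB02 : chB Pch (fun u : Bool => if u then (0:Fin 4) else 2) = 5/18 := by
      norm_num [chB, Pch, Fin.sum_univ_four, Matrix.cons_val_zero, Matrix.cons_val_one, Matrix.cons_val_two, Matrix.cons_val_three, Matrix.head_cons]
    have hCf := hC _ hinj13
    have hBf := hB _ hinj02
    rw [hC13] at hCf
    rw [hB02] at hBf
    have hcases : ∀ x : Fin 4, x = 0 ∨ x = 1 ∨ x = 2 ∨ x = 3 := by decide
    rcases hcases (f true) with h1|h1|h1|h1 <;> rcases hcases (f false) with h2|h2|h2|h2
    all_goals try exact absurd (hinj (h1.trans h2.symm)) (by simp)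
    all_goals try (
      rw [chC_eq_sum _ _ hPy] at hCf
      norm_num [chPy, chμ, h1, h2, Pch, Fin.sum_univ_four, H2_zero', H2_one', H2_half',
        H2_third', H2_quarter', H2_two_thirds', H2_three_quarters', Matrix.cons_val_zero, Matrix.cons_val_one, Matrix.cons_val_two, Matrix.cons_val_three, Matrix.head_cons] at hCf)
    all_goals try linarith
    all_goals norm_num [chB, h1, h2, Pch, Fin.sum_univ_four, Matrix.cons_val_zero, Matrix.cons_val_one, Matrix.cons_val_two, Matrix.cons_val_three, Matrix.head_cons] at hBf
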